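/- arXiv:2208.04812 — 2 statements merged into one kernel-verified Lean document; each statement's English description precedes it below -/
import Mathlib

section
/- Let T be a closable linear operator on a complex Hilbert space H such that T^n is densely defined, and let p be a complex polynomial of degree n. If the spectrum of p(T) is not all of ℂ, then the adjoint of p(T) equals p̄(T*), where p̄ is the polynomial with conjugated coefficients. -/
open LinearPMap

set_option linter.unusedSectionVars false

noncomputable section

section BanachDefs

variable {H : Type*} [NormedAddCommGroup H] [NormedSpace ℂ H]

/-- Composition `g ∘ f` of unbounded operators, with the natural (maximal) domain
`{x ∈ dom f : f x ∈ dom g}`. -/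
def LinearPMap.pComp (g f : H →ₗ.[ℂ] H) : H →ₗ.[ℂ] H where
  domain := (g.domain.comap f.toFun).map f.domain.subtype
  toFun := g.toFun ∘ₗ (f.toFun.restrict (p := g.domain.comap f.toFun) (q := g.domain)
      (fun _ hx => hx)) ∘ₗ
    ((Submodule.equivMapOfInjective f.domain.subtype (Submodule.injective_subtype _)
      (g.domain.comap f.toFun)).symm).toLinearMap

/-- `n`-th power of an unbounded operator; `T^0` is the identity on all of `H`. -/
def LinearPMap.pPow (T : H →ₗ.[ℂ] H) : ℕ → (H →ₗ.[ℂ] H)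
  | 0 => (LinearMap.id : H →ₗ[ℂ] H).toPMap ⊤
  | n + 1 => T.pComp (T.pPow n)

theorem LinearPMap.pPow_domain_succ_le (T : H →ₗ.[ℂ] H) (n : ℕ) :
    (T.pPow (n + 1)).domain ≤ (T.pPow n).domain := by
  intro x hx
  simp_rw [pPow, pComp] at hx
  obtain ⟨y, -, rfl⟩ := hx
  exact y.2

theorem LinearPMap.pPow_domain_le (T : H →ₗ.[ℂ] H) {i n : ℕ} (h : i ≤ n) :
    (T.pPow n).domain ≤ (T.pPow i).domain := by
  induction n with
  | zero => exact Nat.le_zero.mp h ▸ le_rfl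
  | succ n ih =>
    rcases Nat.lt_succ_iff_lt_or_eq.mp (Nat.lt_succ_of_le h) with h' | rfl
    · exact le_trans (T.pPow_domain_succ_le n) (ih (Nat.lt_succ_iff.mp h'))
    · exact le_rfl

/-- `p(T)` for a complex polynomial `p`, defined on `D(T^n)` where `n = deg p`. -/
def LinearPMap.polyApp (p : Polynomial ℂ) (T : H →ₗ.[ℂ] H) : H →ₗ.[ℂ] H where
  domain := (T.pPow p.natDegree).domain
  toFun := ∑ i ∈ (Finset.range (p.natDegree + 1)).attach,
    p.coeff i.1 • ((T.pPow i.1).toFun ∘ₗ Submodule.inclusion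
      (T.pPow_domain_le (Nat.lt_succ_iff.mp (Finset.mem_range.mp i.2))))

/-- `A - μ • I` with domain `dom A`. -/
def LinearPMap.subConst (A : H →ₗ.[ℂ] H) (μ : ℂ) : H →ₗ.[ℂ] H :=
  ⟨A.domain, A.toFun - μ • A.domain.subtype⟩

/-- An unbounded operator is boundedly invertible if it is bijective from its domain onto `H`
with an everywhere-defined bounded (continuous) inverse. -/
def LinearPMap.IsBddInvertible (A : H →ₗ.[ℂ] H) : Prop :=
  ∃ B : H →L[ℂ] H, (∀ y : H, ∃ hy : B y ∈ A.domain, A ⟨B y, hy⟩ = y) ∧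
    ∀ x : A.domain, B (A x) = (x : H)

/-- The spectrum of an unbounded operator: `μ ∉ σ(A)` iff `A - μI` is bijective with a
bounded everywhere-defined inverse. -/
def LinearPMap.pSpectrum (A : H →ₗ.[ℂ] H) : Set ℂ :=
  {μ | ¬ (A.subConst μ).IsBddInvertible}

/-- The kernel of an unbounded operator, as a subset of `H`. -/
def LinearPMap.pKer (A : H →ₗ.[ℂ] H) : Set H :=
  {x | ∃ hx : x ∈ A.domain, A ⟨x, hx⟩ = 0}

/-- The range of an unbounded operator. -/
def LinearPMap.pRan (A : H →ₗ.[ℂ] H) : Set H :=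
  Set.range fun x : A.domain => A x

/-- A bounded everywhere-defined operator seen as an unbounded operator. -/
def ContinuousLinearMap.toPMapTop (B : H →L[ℂ] H) : H →ₗ.[ℂ] H :=
  (B : H →ₗ[ℂ] H).toPMap ⊤

end BanachDefs

section HilbertDefs

variable {H : Type*} [NormedAddCommGroup H] [InnerProductSpace ℂ H] [CompleteSpace H]

/-- A densely defined closed operator is quasinormal if `T T* T = T* T T`. -/
def LinearPMap.IsQuasinormal (T : H →ₗ.[ℂ] H) : Prop :=
  T.IsClosed ∧ Dense (T.domain : Set H) ∧
    T.pComp (T.adjoint.pComp T) = T.adjoint.pComp (T.pComp T)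

/-- A densely defined closed operator is normal if `T* T = T T*` (an equality of unbounded
operators, domains included). -/
def LinearPMap.IsNormal (T : H →ₗ.[ℂ] H) : Prop :=
  T.IsClosed ∧ Dense (T.domain : Set H) ∧ T.adjoint.pComp T = T.pComp T.adjoint

/-- A symmetric (not necessarily densely defined) operator. -/
def LinearPMap.IsSymm (T : H →ₗ.[ℂ] H) : Prop :=
  ∀ x y : T.domain, inner ℂ (T x) (y : H) = (inner ℂ (x : H) (T y) : ℂ)

/-- A paranormal operator: `‖Tx‖² ≤ ‖T²x‖ ‖x‖` for every `x ∈ D(T²)`. -/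
def LinearPMap.IsParanormal (T : H →ₗ.[ℂ] H) : Prop :=
  ∀ (x : H) (hx : x ∈ T.domain) (hTx : T ⟨x, hx⟩ ∈ T.domain),
    ‖T ⟨x, hx⟩‖ ^ 2 ≤ ‖T ⟨T ⟨x, hx⟩, hTx⟩‖ * ‖x‖

end HilbertDefs

end



noncomputable section AuxProof

section AuxBanach

variable {H : Type*} [NormedAddCommGroup H] [NormedSpace ℂ H]


theorem LinearPMap.mem_pComp_domain {g f : H →ₗ.[ℂ] H} {x : H} :
    x ∈ (g.pComp f).domain ↔ ∃ hx : x ∈ f.domain, f ⟨x, hx⟩ ∈ g.domain := by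
  constructor
  · rintro ⟨y, hy, rfl⟩
    exact ⟨y.2, hy⟩
  · rintro ⟨hx, hfx⟩
    exact ⟨⟨x, hx⟩, hfx, rfl⟩

theorem LinearPMap.pComp_apply {g f : H →ₗ.[ℂ] H} {x : H}
    (hx : x ∈ f.domain) (hfx : f ⟨x, hx⟩ ∈ g.domain) (hc : x ∈ (g.pComp f).domain) :
    (g.pComp f) ⟨x, hc⟩ = g ⟨f ⟨x, hx⟩, hfx⟩ := by
  change g.toFun _ = _
  congr 1
  have h1 : ((Submodule.equivMapOfInjective f.domain.subtype (Submodule.injective_subtype _)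
      (g.domain.comap f.toFun)).symm) ⟨x, hc⟩ = ⟨⟨x, hx⟩, hfx⟩ := by
    rw [LinearEquiv.symm_apply_eq]
    ext
    simp [Submodule.coe_equivMapOfInjective_apply]
  simp only [LinearMap.coe_comp, Function.comp_apply, LinearEquiv.coe_coe, h1]
  exact (congrArg (fun z => f.toFun.restrict (p := g.domain.comap f.toFun) (q := g.domain)
    (fun _ hx => hx) z) h1).trans rfl



theorem LinearPMap.pPow_zero_domain (T : H →ₗ.[ℂ] H) : (T.pPow 0).domain = ⊤ := rfl

theorem LinearPMap.pPow_zero_apply (T : H →ₗ.[ℂ] H) (x : (T.pPow 0).domain) :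
    T.pPow 0 x = (x : H) := rfl

theorem LinearPMap.mem_pPow_succ_domain {T : H →ₗ.[ℂ] H} {n : ℕ} {x : H} :
    x ∈ (T.pPow (n + 1)).domain ↔
      ∃ hx : x ∈ (T.pPow n).domain, T.pPow n ⟨x, hx⟩ ∈ T.domain :=
  LinearPMap.mem_pComp_domain

theorem LinearPMap.pPow_succ_apply {T : H →ₗ.[ℂ] H} {n : ℕ} {x : H}
    (hx : x ∈ (T.pPow n).domain) (hfx : T.pPow n ⟨x, hx⟩ ∈ T.domain)
    (hc : x ∈ (T.pPow (n + 1)).domain) :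
    T.pPow (n + 1) ⟨x, hc⟩ = T ⟨T.pPow n ⟨x, hx⟩, hfx⟩ :=
  LinearPMap.pComp_apply hx hfx hc

/-- membership in `D(T^{k+1})` gives `T^k x ∈ D(T)`. -/
theorem LinearPMap.pPow_succ_mem {T : H →ₗ.[ℂ] H} {n : ℕ} {x : H}
    (hc : x ∈ (T.pPow (n + 1)).domain) (hx : x ∈ (T.pPow n).domain) :
    T.pPow n ⟨x, hx⟩ ∈ T.domain := by
  obtain ⟨hx', h⟩ := LinearPMap.mem_pPow_succ_domain.mp hc
  exact h

/-- the "shift" decomposition: `T^{n+1} = T^n ∘ T`. -/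
theorem LinearPMap.pPow_shift {T : H →ₗ.[ℂ] H} (n : ℕ) {x : H}
    (hc : x ∈ (T.pPow (n + 1)).domain) :
    ∃ (h1 : x ∈ T.domain) (h2 : T ⟨x, h1⟩ ∈ (T.pPow n).domain),
      T.pPow (n + 1) ⟨x, hc⟩ = T.pPow n ⟨T ⟨x, h1⟩, h2⟩ := by
  induction n with
  | zero =>
    obtain ⟨hx, h⟩ := LinearPMap.mem_pPow_succ_domain.mp hc
    have h1 : x ∈ T.domain := h
    refine ⟨h1, Submodule.mem_top, ?_⟩
    rw [LinearPMap.pPow_succ_apply hx h hc]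
    rfl
  | succ n ih =>
    obtain ⟨hx, h⟩ := LinearPMap.mem_pPow_succ_domain.mp hc
    obtain ⟨h1, h2, hval⟩ := ih hx
    have h2' : T ⟨x, h1⟩ ∈ (T.pPow (n + 1)).domain :=
      LinearPMap.mem_pPow_succ_domain.mpr ⟨h2, by rwa [← hval]⟩
    refine ⟨h1, h2', ?_⟩
    rw [LinearPMap.pPow_succ_apply hx h hc,
      LinearPMap.pPow_succ_apply h2 (by rwa [← hval]) h2']
    congr 1
    exact Subtype.ext hval

/-- the converse of `pPow_shift`: membership. -/
theorem LinearPMap.pPow_shift_mem {T : H →ₗ.[ℂ] H} (n : ℕ) {x : H}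
    (h1 : x ∈ T.domain) (h2 : T ⟨x, h1⟩ ∈ (T.pPow n).domain) :
    x ∈ (T.pPow (n + 1)).domain := by
  induction n with
  | zero => exact LinearPMap.mem_pPow_succ_domain.mpr ⟨Submodule.mem_top, h1⟩
  | succ n ih =>
    obtain ⟨ha, hb⟩ := LinearPMap.mem_pPow_succ_domain.mp h2
    have hx : x ∈ (T.pPow (n + 1)).domain := ih ha
    obtain ⟨h1', h2', hval⟩ := LinearPMap.pPow_shift n hx
    refine LinearPMap.mem_pPow_succ_domain.mpr ⟨hx, ?_⟩
    rw [hval]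
    convert hb using 2

open Classical in
def LinearPMap.pApply (T : H →ₗ.[ℂ] H) (i : ℕ) (x : H) : H :=
  if h : x ∈ (T.pPow i).domain then T.pPow i ⟨x, h⟩ else 0

theorem LinearPMap.pApply_eq (T : H →ₗ.[ℂ] H) {i : ℕ} {x : H}
    (h : x ∈ (T.pPow i).domain) : T.pApply i x = T.pPow i ⟨x, h⟩ := by
  simp [LinearPMap.pApply, h]

theorem LinearPMap.polyApp_apply (p : Polynomial ℂ) (T : H →ₗ.[ℂ] H)
    {x : H} (hx : x ∈ (LinearPMap.polyApp p T).domain) :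
    LinearPMap.polyApp p T ⟨x, hx⟩ =
      ∑ i ∈ Finset.range (p.natDegree + 1), p.coeff i • T.pApply i x := by
  have : LinearPMap.polyApp p T ⟨x, hx⟩ =
      ∑ i ∈ (Finset.range (p.natDegree + 1)).attach,
        p.coeff i.1 • T.pApply i.1 x := by
    change (∑ i ∈ (Finset.range (p.natDegree + 1)).attach,
      p.coeff i.1 • ((T.pPow i.1).toFun ∘ₗ Submodule.inclusion
        (T.pPow_domain_le (Nat.lt_succ_iff.mp (Finset.mem_range.mp i.2))))) ⟨x, hx⟩ = _
    rw [LinearMap.sum_apply]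
    refine Finset.sum_congr rfl fun i _ => ?_
    rw [LinearMap.smul_apply, LinearMap.comp_apply,
      T.pApply_eq (T.pPow_domain_le (Nat.lt_succ_iff.mp (Finset.mem_range.mp i.2)) hx)]
    rfl
  rw [this]
  exact Finset.sum_attach _ fun i => p.coeff i • T.pApply i x

theorem LinearPMap.pPow_one_domain (T : H →ₗ.[ℂ] H) : (T.pPow 1).domain = T.domain := by
  ext x
  constructor
  · intro h
    obtain ⟨hx, h'⟩ := LinearPMap.mem_pPow_succ_domain.mp h
    exact h'
  · intro h
    exact LinearPMap.mem_pPow_succ_domain.mpr ⟨Submodule.mem_top, h⟩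

theorem LinearPMap.pApply_one {T : H →ₗ.[ℂ] H} {u : H} (h : u ∈ T.domain) :
    T.pApply 1 u = T ⟨u, h⟩ := by
  have h1 : u ∈ (T.pPow 1).domain := (T.pPow_one_domain ▸ h : _)
  rw [T.pApply_eq h1, LinearPMap.pPow_succ_apply Submodule.mem_top
    (show T.pPow 0 ⟨u, Submodule.mem_top⟩ ∈ T.domain from h) h1]
  congr 1

theorem LinearPMap.pApply_mem_of {T : H →ₗ.[ℂ] H} {i : ℕ} {u : H}
    (h : u ∈ (T.pPow (i + 1)).domain) : T.pApply i u ∈ T.domain := by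
  rw [T.pApply_eq (T.pPow_domain_succ_le i h)]
  exact LinearPMap.pPow_succ_mem h _

theorem LinearPMap.pApply_succ {T : H →ₗ.[ℂ] H} {i : ℕ} {u : H}
    (h : u ∈ (T.pPow (i + 1)).domain) (hm : T.pApply i u ∈ T.domain) :
    T ⟨T.pApply i u, hm⟩ = T.pApply (i + 1) u := by
  rw [T.pApply_eq h, LinearPMap.pPow_succ_apply (T.pPow_domain_succ_le i h)
    (LinearPMap.pPow_succ_mem h _) h]
  congr 1
  exact Subtype.ext (T.pApply_eq (T.pPow_domain_succ_le i h))

theorem LinearPMap.pApply_shift {T : H →ₗ.[ℂ] H} {i : ℕ} {u : H}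
    (h1 : u ∈ T.domain) (h2 : T ⟨u, h1⟩ ∈ (T.pPow i).domain) :
    T.pApply i (T ⟨u, h1⟩) = T.pApply (i + 1) u := by
  have hc : u ∈ (T.pPow (i + 1)).domain := LinearPMap.pPow_shift_mem i h1 h2
  obtain ⟨h1', h2', hval⟩ := LinearPMap.pPow_shift i hc
  rw [T.pApply_eq h2, T.pApply_eq hc, hval]

section Inverse

variable {T : H →ₗ.[ℂ] H} {p : Polynomial ℂ} {μ : ℂ} {B : H →L[ℂ] H}
variable (hBmem : ∀ y : H, B y ∈ (T.pPow p.natDegree).domain)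
variable (hBright : ∀ y : H, LinearPMap.polyApp p T ⟨B y, hBmem y⟩ - μ • B y = y)
variable (hBleft : ∀ (x : H) (hx : x ∈ (T.pPow p.natDegree).domain),
    B (LinearPMap.polyApp p T ⟨x, hx⟩ - μ • x) = x)
variable (hn : p.natDegree ≠ 0)

include hBleft in
theorem Sinj {a b : H} (ha : a ∈ (T.pPow p.natDegree).domain)
    (hb : b ∈ (T.pPow p.natDegree).domain)
    (h : LinearPMap.polyApp p T ⟨a, ha⟩ - μ • a = LinearPMap.polyApp p T ⟨b, hb⟩ - μ • b) :
    a = b := by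
  have h1 := hBleft a ha
  rw [h, hBleft b hb] at h1
  exact h1.symm

include hn in
theorem coeff_nd_ne : p.coeff p.natDegree ≠ 0 := by
  have hp0 : p ≠ 0 := by
    intro h
    exact hn (by simp [h])
  exact Polynomial.leadingCoeff_ne_zero.mpr hp0

include hBmem hBright hn in
theorem reg (x : H) (hx : x ∈ T.domain) :
    B x ∈ (T.pPow (p.natDegree + 1)).domain := by
  set n := p.natDegree with hnn
  have hu : B x ∈ (T.pPow n).domain := hBmem x
  have key : p.coeff n • T.pApply n (B x) =
      x + μ • B x - ∑ i ∈ Finset.range n, p.coeff i • T.pApply i (B x) := by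
    have hA : (∑ i ∈ Finset.range (p.natDegree + 1), p.coeff i • T.pApply i (B x)) - μ • B x = x :=
      (congrArg (fun z => z - μ • B x) (LinearPMap.polyApp_apply p T (hBmem x))).symm.trans (hBright x)
    rw [Finset.sum_range_succ] at hA
    rw [sub_eq_iff_eq_add] at hA
    linear_combination (norm := module) hA
  have hmem1 : B x ∈ T.domain := by
    have := T.pPow_domain_le (Nat.one_le_iff_ne_zero.mpr hn) hu
    rwa [T.pPow_one_domain] at this
  have hterms : ∀ i ∈ Finset.range n, p.coeff i • T.pApply i (B x) ∈ T.domain := by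
    intro i hi
    refine Submodule.smul_mem _ _ (LinearPMap.pApply_mem_of ?_)
    exact T.pPow_domain_le (Finset.mem_range.mp hi) hu
  have htop : p.coeff n • T.pApply n (B x) ∈ T.domain := by
    rw [key]
    exact sub_mem (add_mem hx (Submodule.smul_mem _ _ hmem1)) (Submodule.sum_mem _ hterms)
  have hfin : T.pApply n (B x) ∈ T.domain := by
    have := Submodule.smul_mem T.domain (p.coeff n)⁻¹ htop
    rwa [inv_smul_smul₀ (coeff_nd_ne hn)] at this
  refine LinearPMap.mem_pPow_succ_domain.mpr ⟨hu, ?_⟩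
  rwa [← T.pApply_eq hu]

include hBmem hBright hBleft hn in
theorem commB (x : H) (hx : x ∈ T.domain) (hBx : B x ∈ T.domain) :
    T ⟨B x, hBx⟩ = B (T ⟨x, hx⟩) := by
  set n := p.natDegree with hnn
  set u := B x with hu_def
  have hu : u ∈ (T.pPow n).domain := hBmem x
  have hu1 : u ∈ (T.pPow (n + 1)).domain := reg hBmem hBright hn x hx
  have hTu : T ⟨u, hBx⟩ ∈ (T.pPow n).domain := by
    obtain ⟨h1, h2, -⟩ := LinearPMap.pPow_shift n hu1
    exact h2
  have hmemi : ∀ i, i ∈ Finset.range (n + 1) → T.pApply i u ∈ T.domain := by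
    intro i hi
    exact LinearPMap.pApply_mem_of (T.pPow_domain_le (Finset.mem_range.mp hi) hu1)
  -- the element w of T.domain whose coercion is x
  set w : T.domain := (∑ i ∈ (Finset.range (n + 1)).attach,
      p.coeff i.1 • (⟨T.pApply i.1 u, hmemi i.1 i.2⟩ : T.domain)) - μ • ⟨u, hBx⟩ with hw_def
  have hwcoe : (w : H) = x := by
    have hx' : (∑ i ∈ Finset.range (p.natDegree + 1), p.coeff i • T.pApply i (B x)) - μ • B x = x :=
      (congrArg (fun z => z - μ • B x) (LinearPMap.polyApp_apply p T (hBmem x))).symm.trans (hBright x)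
    rw [hw_def]
    push_cast
    rw [← hx']
    congr 1
    rw [← Finset.sum_attach (Finset.range (n+1)) (fun i => p.coeff i • T.pApply i u)]
  -- T x = sum of shifted applications
  have hTx : T ⟨x, hx⟩ =
      ∑ i ∈ Finset.range (n + 1), p.coeff i • T.pApply (i + 1) u - μ • T.pApply 1 u := by
    have : T ⟨x, hx⟩ = T w := by congr 1; exact Subtype.ext hwcoe.symm
    rw [this, hw_def, ← LinearPMap.toFun_eq_coe, _root_.map_sub, _root_.map_smul, _root_.map_sum]
    rw [LinearPMap.toFun_eq_coe]
    congr 1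
    · rw [← Finset.sum_attach (Finset.range (n+1)) (fun i => p.coeff i • T.pApply (i+1) u)]
      refine Finset.sum_congr rfl fun i _ => ?_
      rw [_root_.map_smul, LinearPMap.toFun_eq_coe,
        LinearPMap.pApply_succ (T.pPow_domain_le (Finset.mem_range.mp i.2) hu1) (hmemi i.1 i.2)]
    · rw [T.pApply_one hBx]
  -- S (T u) = T x
  have hSTu : LinearPMap.polyApp p T ⟨T ⟨u, hBx⟩, hTu⟩ - μ • T ⟨u, hBx⟩ = T ⟨x, hx⟩ := by
    refine (congrArg (fun z => z - μ • T ⟨u, hBx⟩) (LinearPMap.polyApp_apply p T hTu)).trans ?_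
    beta_reduce
    rw [hTx]
    congr 1
    · refine Finset.sum_congr rfl fun i hi => ?_
      congr 1
      exact LinearPMap.pApply_shift hBx (T.pPow_domain_le (Nat.lt_succ_iff.mp
        (Finset.mem_range.mp hi)) hTu)
    · rw [T.pApply_one hBx]
  have hS2 := hBright (T ⟨x, hx⟩)
  exact Sinj hBleft hTu (hBmem (T ⟨x, hx⟩)) (by rw [hSTu, hS2])

end Inverse

section Chain

open Filter Topology

variable {T : H →ₗ.[ℂ] H} {p : Polynomial ℂ} {μ : ℂ} {B : H →L[ℂ] H}
variable [CompleteSpace H]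
variable (hBmem : ∀ y : H, B y ∈ (T.pPow p.natDegree).domain)
variable (hBright : ∀ y : H, LinearPMap.polyApp p T ⟨B y, hBmem y⟩ - μ • B y = y)
variable (hn : p.natDegree ≠ 0)

include hBmem in
theorem exists_C (hclosable : T.IsClosable) (j : ℕ) (hj : j ≤ p.natDegree) :
    ∃ Cj : H →L[ℂ] H, ∀ (x : H) (hx : B x ∈ (T.pPow j).domain),
      Cj x = T.pPow j ⟨B x, hx⟩ := by
  induction j with
  | zero => exact ⟨B, fun x hx => rfl⟩
  | succ j ih =>
    obtain ⟨Cj, hCj⟩ := ih (Nat.le_of_succ_le hj)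
    have hmem : ∀ x : H, Cj x ∈ T.domain := by
      intro x
      rw [hCj x (T.pPow_domain_le (Nat.le_of_succ_le hj) (hBmem x))]
      exact LinearPMap.pPow_succ_mem (T.pPow_domain_le hj (hBmem x)) _
    set L : H →ₗ[ℂ] H :=
      T.toFun ∘ₗ LinearMap.codRestrict T.domain (Cj : H →ₗ[ℂ] H) hmem with hL_def
    have hLval : ∀ x : H, L x = T ⟨Cj x, hmem x⟩ := fun x => rfl
    have hcont : Continuous L := by
      apply LinearMap.continuous_of_seq_closed_graph
      intro useq xx yy hux huy
      have h1 : Tendsto (fun k => Cj (useq k)) atTop (𝓝 (Cj xx)) :=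
        (Cj.continuous.tendsto xx).comp hux
      have h2 : Tendsto (fun k => ((Cj (useq k), L (useq k)) : H × H)) atTop
          (𝓝 (Cj xx, yy)) := h1.prodMk_nhds huy
      have hgraph : ∀ k, ((Cj (useq k), L (useq k)) : H × H) ∈ (T.graph : Set (H × H)) := by
        intro k
        exact T.mem_graph ⟨Cj (useq k), hmem _⟩
      have hcl : ((Cj xx, yy) : H × H) ∈ closure (T.graph : Set (H × H)) :=
        mem_closure_of_tendsto h2 (Filter.Eventually.of_forall hgraph)
      rw [← Submodule.topologicalClosure_coe, hclosable.graph_closure_eq_closure_graph] at hcl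
      have hcl' : ((Cj xx, yy) : H × H) ∈ T.closure.graph := hcl
      rw [LinearPMap.mem_graph_iff] at hcl'
      obtain ⟨z, hz1, hz2⟩ := hcl'
      have hz1' : (z : H) = Cj xx := hz1
      have hz2' : T.closure z = yy := hz2
      have hzz : T.closure ⟨Cj xx, T.le_closure.1 (hmem xx)⟩ = yy := by
        rw [← hz2']
        congr 1
        exact Subtype.ext hz1'.symm
      rw [hLval, T.le_closure.2 (show ((⟨Cj xx, hmem xx⟩ : T.domain) : H) =
        ((⟨Cj xx, T.le_closure.1 (hmem xx)⟩ : T.closure.domain) : H) from rfl), hzz]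
    refine ⟨⟨L, hcont⟩, fun x hx => ?_⟩
    have hBx : B x ∈ (T.pPow j).domain := T.pPow_domain_succ_le j hx
    have hfx : T.pPow j ⟨B x, hBx⟩ ∈ T.domain := LinearPMap.pPow_succ_mem hx hBx
    rw [LinearPMap.pPow_succ_apply hBx hfx hx]
    show L x = _
    rw [hLval]
    congr 1
    exact Subtype.ext (hCj x hBx)

end Chain

end AuxBanach

section HilbertSide

variable {H : Type*} [NormedAddCommGroup H] [InnerProductSpace ℂ H] [CompleteSpace H]

local notation "⟪" x ", " y "⟫" => @inner ℂ _ _ x y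

variable {T : H →ₗ.[ℂ] H}

theorem inner_pPow (hdense : Dense (T.domain : Set H)) (k : ℕ) (y x : H)
    (hy : y ∈ ((T.adjoint).pPow k).domain) (hx : x ∈ (T.pPow k).domain) :
    ⟪(T.adjoint).pPow k ⟨y, hy⟩, x⟫ = ⟪y, T.pPow k ⟨x, hx⟩⟫ := by
  induction k generalizing x y with
  | zero => rfl
  | succ k ih =>
    obtain ⟨hyk, hyk'⟩ := LinearPMap.mem_pPow_succ_domain.mp hy
    obtain ⟨h1, h2, hval⟩ := T.pPow_shift k hx
    rw [LinearPMap.pPow_succ_apply hyk hyk' hy, hval]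
    have hfa := LinearPMap.adjoint_isFormalAdjoint hdense
      (⟨T.adjoint.pPow k ⟨y, hyk⟩, hyk'⟩ : T.adjoint.domain) (⟨x, h1⟩ : T.domain)
    rw [hfa]
    exact ih y (T ⟨x, h1⟩) hyk h2

theorem polyApp_isFormalAdjoint (hdense : Dense (T.domain : Set H)) (p : Polynomial ℂ) :
    (LinearPMap.polyApp p T).IsFormalAdjoint
      (LinearPMap.polyApp (p.map (starRingEnd ℂ)) T.adjoint) := by
  intro x y
  obtain ⟨x, hx⟩ := x
  obtain ⟨y, hy⟩ := y
  have hm : (p.map (starRingEnd ℂ)).natDegree = p.natDegree :=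
    p.natDegree_map (starRingEnd ℂ)
  have hy' : y ∈ ((T.adjoint).pPow (p.map (starRingEnd ℂ)).natDegree).domain := hy
  rw [LinearPMap.polyApp_apply, LinearPMap.polyApp_apply, sum_inner, inner_sum, hm]
  refine Finset.sum_congr rfl fun i hi => ?_
  have hi' : i ≤ p.natDegree := Nat.lt_succ_iff.mp (Finset.mem_range.mp hi)
  have hxi : x ∈ (T.pPow i).domain := T.pPow_domain_le hi' hx
  have hyi : y ∈ ((T.adjoint).pPow i).domain :=
    (T.adjoint).pPow_domain_le hi' (hm ▸ hy')
  rw [Polynomial.coeff_map, inner_smul_left, inner_smul_right,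
    T.pApply_eq hxi, (T.adjoint).pApply_eq hyi]
  congr 1
  exact (inner_conj_symm _ _).symm.trans
    ((congrArg (starRingEnd ℂ) (inner_pPow hdense i y x hyi hxi)).symm.trans
      (inner_conj_symm _ _))

variable {p : Polynomial ℂ} {μ : ℂ} {B : H →L[ℂ] H}
variable (hBmem : ∀ y : H, B y ∈ (T.pPow p.natDegree).domain)
variable (hBright : ∀ y : H, LinearPMap.polyApp p T ⟨B y, hBmem y⟩ - μ • B y = y)
variable (hBleft : ∀ (x : H) (hx : x ∈ (T.pPow p.natDegree).domain),
    B (LinearPMap.polyApp p T ⟨x, hx⟩ - μ • x) = x)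
variable (hn : p.natDegree ≠ 0)

include hBmem hBright hBleft hn in
theorem adj_chain (hdense : Dense (T.domain : Set H)) (hclosable : T.IsClosable)
    (j : ℕ) (hj : j ≤ p.natDegree) (Cj : H →L[ℂ] H)
    (hCj : ∀ (x : H) (hx : B x ∈ (T.pPow j).domain), Cj x = T.pPow j ⟨B x, hx⟩) (u : H) :
    ∃ hmem : (ContinuousLinearMap.adjoint B) u ∈ ((T.adjoint).pPow j).domain,
      (T.adjoint).pPow j ⟨(ContinuousLinearMap.adjoint B) u, hmem⟩ =
        (ContinuousLinearMap.adjoint Cj) u := by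
  induction j generalizing Cj with
  | zero =>
    have hCB : Cj = B := by
      ext x
      exact (hCj x Submodule.mem_top).trans rfl
    refine ⟨Submodule.mem_top, ?_⟩
    rw [hCB]
    rfl
  | succ j ih =>
    obtain ⟨Cj', hCj'⟩ := exists_C hBmem hclosable j (Nat.le_of_succ_le hj)
    obtain ⟨hmem_j, val_j⟩ := ih (Nat.le_of_succ_le hj) Cj' hCj'
    have key : ∀ xx : T.domain, ⟪(ContinuousLinearMap.adjoint Cj) u, (xx : H)⟫ =
        ⟪(ContinuousLinearMap.adjoint Cj') u, T xx⟫ := by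
      intro xx
      rw [ContinuousLinearMap.adjoint_inner_left, ContinuousLinearMap.adjoint_inner_left]
      congr 1
      have hBx1 : B (xx : H) ∈ (T.pPow (p.natDegree + 1)).domain :=
        reg hBmem hBright hn (xx : H) xx.2
      have hBxj1 : B (xx : H) ∈ (T.pPow (j + 1)).domain :=
        T.pPow_domain_le (Nat.succ_le_succ (Nat.le_of_succ_le hj)) hBx1
      have hBxd : B (xx : H) ∈ T.domain := by
        have := T.pPow_domain_le (Nat.one_le_iff_ne_zero.mpr (Nat.succ_ne_zero j)) hBxj1
        rwa [T.pPow_one_domain] at this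
      have hcomm : T ⟨B (xx : H), hBxd⟩ = B (T xx) :=
        commB hBmem hBright hBleft hn (xx : H) xx.2 hBxd
      have hmemTx : B (T xx) ∈ (T.pPow j).domain :=
        T.pPow_domain_le (Nat.le_of_succ_le hj) (hBmem (T xx))
      have h2 : T ⟨B (xx : H), hBxd⟩ ∈ (T.pPow j).domain := by rw [hcomm]; exact hmemTx
      symm
      calc Cj' (T xx) = T.pPow j ⟨B (T xx), hmemTx⟩ := hCj' _ hmemTx
        _ = T.pApply j (B (T xx)) := (T.pApply_eq hmemTx).symm
        _ = T.pApply j (T ⟨B (xx : H), hBxd⟩) := by rw [hcomm]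
        _ = T.pApply (j + 1) (B (xx : H)) := LinearPMap.pApply_shift hBxd h2
        _ = T.pPow (j + 1) ⟨B (xx : H), hBxj1⟩ := T.pApply_eq hBxj1
        _ = Cj (xx : H) := (hCj _ hBxj1).symm
    have memC : (ContinuousLinearMap.adjoint Cj') u ∈ T.adjoint.domain :=
      LinearPMap.mem_adjoint_domain_of_exists _
        ⟨(ContinuousLinearMap.adjoint Cj) u, key⟩
    have valC : T.adjoint ⟨(ContinuousLinearMap.adjoint Cj') u, memC⟩ =
        (ContinuousLinearMap.adjoint Cj) u :=
      LinearPMap.adjoint_apply_eq hdense _ key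
    have hmem_j' : (T.adjoint).pPow j ⟨(ContinuousLinearMap.adjoint B) u, hmem_j⟩ ∈
        T.adjoint.domain := by rw [val_j]; exact memC
    refine ⟨LinearPMap.mem_pPow_succ_domain.mpr ⟨hmem_j, hmem_j'⟩, ?_⟩
    rw [LinearPMap.pPow_succ_apply hmem_j hmem_j'
      (LinearPMap.mem_pPow_succ_domain.mpr ⟨hmem_j, hmem_j'⟩)]
    rw [show (⟨(T.adjoint).pPow j ⟨(ContinuousLinearMap.adjoint B) u, hmem_j⟩, hmem_j'⟩ :
      T.adjoint.domain) = ⟨(ContinuousLinearMap.adjoint Cj') u, memC⟩ from Subtype.ext val_j]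
    exact valC

end HilbertSide

end AuxProof

/-- if `T` is closable, `T^n` is densely defined, `p` has degree `n`, and
`σ(p(T)) ≠ ℂ`, then `(p(T))* = p̄(T*)`. -/
theorem statement_0 {H : Type*} [NormedAddCommGroup H] [InnerProductSpace ℂ H] [CompleteSpace H]
    (T : H →ₗ.[ℂ] H) (hdense : Dense (T.domain : Set H)) (hclosable : T.IsClosable)
    (p : Polynomial ℂ) (n : ℕ) (hdeg : p.natDegree = n)
    (hTn : Dense ((T.pPow n).domain : Set H))
    (hspec : (LinearPMap.polyApp p T).pSpectrum ≠ Set.univ) :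
    (LinearPMap.polyApp p T).adjoint =
      LinearPMap.polyApp (p.map (starRingEnd ℂ)) T.adjoint := by
  subst hdeg
  have hm : (p.map (starRingEnd ℂ)).natDegree = p.natDegree :=
    p.natDegree_map (starRingEnd ℂ)
  set A := LinearPMap.polyApp p T with hA_def
  -- the easy inclusion
  have hle : LinearPMap.polyApp (p.map (starRingEnd ℂ)) T.adjoint ≤ A.adjoint :=
    LinearPMap.IsFormalAdjoint.le_adjoint (T := A)
      (hT := show Dense (A.domain : Set H) from hTn) (polyApp_isFormalAdjoint hdense p)
  -- the hard inclusion of domains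
  have hdom : A.adjoint.domain ≤ (LinearPMap.polyApp (p.map (starRingEnd ℂ)) T.adjoint).domain := by
    by_cases hn : p.natDegree = 0
    · intro v _
      show v ∈ ((T.adjoint).pPow (p.map (starRingEnd ℂ)).natDegree).domain
      rw [hm, hn]
      exact Submodule.mem_top
    · -- get the bounded inverse
      obtain ⟨μ, hμ⟩ := Set.ne_univ_iff_exists_notMem _ |>.mp hspec
      have hinv : (A.subConst μ).IsBddInvertible := not_not.mp hμ
      obtain ⟨B, hB1, hB2⟩ := hinv
      have hBmem : ∀ y : H, B y ∈ (T.pPow p.natDegree).domain := fun y => (hB1 y).choose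
      have hBright : ∀ y : H, LinearPMap.polyApp p T ⟨B y, hBmem y⟩ - μ • B y = y :=
        fun y => (hB1 y).choose_spec
      have hBleft : ∀ (x : H) (hx : x ∈ (T.pPow p.natDegree).domain),
          B (LinearPMap.polyApp p T ⟨x, hx⟩ - μ • x) = x := fun x hx => hB2 ⟨x, hx⟩
      intro v hv
      set w := A.adjoint ⟨v, hv⟩ - (starRingEnd ℂ) μ • v with hw_def
      have hclaim : v = (ContinuousLinearMap.adjoint B) w := by
        refine (ext_inner_right ℂ fun x => ?_).symm
        rw [ContinuousLinearMap.adjoint_inner_left, hw_def, inner_sub_left, inner_smul_left]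
        have hfa := LinearPMap.adjoint_isFormalAdjoint (T := A) (show Dense (A.domain : Set H) from hTn)
          (⟨v, hv⟩ : A.adjoint.domain) (⟨B x, hBmem x⟩ : A.domain)
        rw [hfa]
        have := hBright x
        rw [starRingEnd_self_apply, ← inner_smul_right, ← inner_sub_right, hBright x]
      obtain ⟨Cn, hCn⟩ := exists_C hBmem hclosable p.natDegree le_rfl
      obtain ⟨hmem, -⟩ := adj_chain hBmem hBright hBleft hn hdense hclosable
        p.natDegree le_rfl Cn hCn w
      rw [← hclaim] at hmem
      show v ∈ ((T.adjoint).pPow (p.map (starRingEnd ℂ)).natDegree).domain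
      rw [hm]
      exact hmem
  exact (LinearPMap.eq_of_le_of_domain_eq hle (le_antisymm hle.1 hdom)).symm
end

section
/- Let T be a densely defined closable linear operator on a complex Hilbert space with σ(p(T)) ≠ ℂ for a complex polynomial p. Then the closure of p(T) equals p applied to the closure of T, i.e. cl(p(T)) = p(cl(T)). -/
open LinearPMap

set_option linter.unusedSectionVars false

section Helpers

namespace LinearPMap

variable {H : Type*} [NormedAddCommGroup H] [NormedSpace ℂ H]

theorem mem_pComp_domain_s2 {g f : H →ₗ.[ℂ] H} {x : H} :
    x ∈ (g.pComp f).domain ↔ ∃ hx : x ∈ f.domain, f ⟨x, hx⟩ ∈ g.domain := by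
  constructor
  · rintro ⟨y, hy, rfl⟩
    exact ⟨y.2, by simpa using hy⟩
  · rintro ⟨hx, hfx⟩
    exact ⟨⟨x, hx⟩, hfx, rfl⟩

theorem pComp_apply_s2 (g f : H →ₗ.[ℂ] H) {x : H} (hx : x ∈ f.domain)
    (hfx : f ⟨x, hx⟩ ∈ g.domain) (hm : x ∈ (g.pComp f).domain) :
    (g.pComp f) ⟨x, hm⟩ = g ⟨f ⟨x, hx⟩, hfx⟩ := by
  have hsymm : ((Submodule.equivMapOfInjective f.domain.subtype
      (Submodule.injective_subtype _) (g.domain.comap f.toFun)).symm ⟨x, hm⟩ :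
      (g.domain.comap f.toFun)) = ⟨⟨x, hx⟩, hfx⟩ := by
    rw [LinearEquiv.symm_apply_eq]
    apply Subtype.ext
    rw [Submodule.coe_equivMapOfInjective_apply]
    rfl
  have hdef : (g.pComp f) ⟨x, hm⟩ = g.toFun
      ((f.toFun.restrict (p := g.domain.comap f.toFun) (q := g.domain) (fun _ hx => hx))
        ((Submodule.equivMapOfInjective f.domain.subtype (Submodule.injective_subtype _)
          (g.domain.comap f.toFun)).symm ⟨x, hm⟩)) := rfl
  rw [hdef, hsymm]
  rfl

theorem pPow_zero (T : H →ₗ.[ℂ] H) : T.pPow 0 = (LinearMap.id : H →ₗ[ℂ] H).toPMap ⊤ := rfl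

theorem pPow_succ (T : H →ₗ.[ℂ] H) (k : ℕ) : T.pPow (k + 1) = T.pComp (T.pPow k) := rfl

theorem mem_pPow_zero (T : H →ₗ.[ℂ] H) (x : H) : x ∈ (T.pPow 0).domain := trivial

theorem pPow_zero_apply_s2 (T : H →ₗ.[ℂ] H) (x : H) (h : x ∈ (T.pPow 0).domain) :
    (T.pPow 0) ⟨x, h⟩ = x := rfl

theorem mem_pPow_succ {T : H →ₗ.[ℂ] H} {k : ℕ} {x : H} :
    x ∈ (T.pPow (k + 1)).domain ↔
      ∃ hx : x ∈ (T.pPow k).domain, (T.pPow k) ⟨x, hx⟩ ∈ T.domain :=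
  mem_pComp_domain_s2

theorem pPow_succ_apply_s2 (T : H →ₗ.[ℂ] H) (k : ℕ) {x : H} (hx : x ∈ (T.pPow k).domain)
    (h2 : (T.pPow k) ⟨x, hx⟩ ∈ T.domain) (hm : x ∈ (T.pPow (k + 1)).domain) :
    (T.pPow (k + 1)) ⟨x, hm⟩ = T ⟨(T.pPow k) ⟨x, hx⟩, h2⟩ :=
  pComp_apply_s2 T (T.pPow k) hx h2 hm

open Classical in
/-- Apply a partial linear map, with junk value `0` outside the domain. -/
noncomputable def pApp (f : H →ₗ.[ℂ] H) (x : H) : H :=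
  if h : x ∈ f.domain then f ⟨x, h⟩ else 0

theorem pApp_eq (f : H →ₗ.[ℂ] H) {x : H} (h : x ∈ f.domain) : f.pApp x = f ⟨x, h⟩ := by
  simp [pApp, h]

theorem pApp_add (f : H →ₗ.[ℂ] H) {x y : H} (hx : x ∈ f.domain) (hy : y ∈ f.domain) :
    f.pApp (x + y) = f.pApp x + f.pApp y := by
  rw [pApp_eq f (add_mem hx hy), pApp_eq f hx, pApp_eq f hy]
  have : (⟨x + y, add_mem hx hy⟩ : f.domain) = ⟨x, hx⟩ + ⟨y, hy⟩ := rfl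
  rw [this, map_add]

theorem pApp_sub (f : H →ₗ.[ℂ] H) {x y : H} (hx : x ∈ f.domain) (hy : y ∈ f.domain) :
    f.pApp (x - y) = f.pApp x - f.pApp y := by
  rw [pApp_eq f (sub_mem hx hy), pApp_eq f hx, pApp_eq f hy]
  have : (⟨x - y, sub_mem hx hy⟩ : f.domain) = ⟨x, hx⟩ - ⟨y, hy⟩ := rfl
  rw [this, map_sub]

theorem pApp_smul (f : H →ₗ.[ℂ] H) (c : ℂ) {x : H} (hx : x ∈ f.domain) :
    f.pApp (c • x) = c • f.pApp x := by
  rw [pApp_eq f (Submodule.smul_mem _ c hx), pApp_eq f hx]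
  have : (⟨c • x, Submodule.smul_mem _ c hx⟩ : f.domain) = c • ⟨x, hx⟩ := rfl
  rw [this, map_smul]

theorem pApp_zero (f : H →ₗ.[ℂ] H) : f.pApp 0 = 0 := by
  rw [pApp_eq f (zero_mem _)]
  exact f.map_zero

theorem pApp_sum (f : H →ₗ.[ℂ] H) {ι : Type*} (s : Finset ι) (u : ι → H)
    (hu : ∀ i ∈ s, u i ∈ f.domain) :
    f.pApp (∑ i ∈ s, u i) = ∑ i ∈ s, f.pApp (u i) := by
  classical
  induction s using Finset.induction_on with
  | empty => simpa using f.pApp_zero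
  | @insert a s' hnot ih =>
    rw [Finset.sum_insert hnot, Finset.sum_insert hnot,
      pApp_add f (hu a (Finset.mem_insert_self a s'))
        (Submodule.sum_mem _ fun i hi => hu i (Finset.mem_insert_of_mem hi)),
      ih fun i hi => hu i (Finset.mem_insert_of_mem hi)]

end LinearPMap

end Helpers
section Helpers2

namespace LinearPMap

variable {H : Type*} [NormedAddCommGroup H] [NormedSpace ℂ H]

theorem mem_pPow_one {T : H →ₗ.[ℂ] H} {x : H} :
    x ∈ (T.pPow 1).domain ↔ x ∈ T.domain := by
  rw [mem_pPow_succ]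
  constructor
  · rintro ⟨hx, h⟩
    simpa [pPow_zero_apply_s2] using h
  · intro h
    exact ⟨mem_pPow_zero T x, by rw [pPow_zero_apply_s2]; exact h⟩

theorem pApp_pPow_zero (T : H →ₗ.[ℂ] H) (x : H) : (T.pPow 0).pApp x = x := by
  rw [pApp_eq _ (mem_pPow_zero T x), pPow_zero_apply_s2]

/-- `T^{k+1} x = T (T^k x)`. -/
theorem pApp_pPow_succ (T : H →ₗ.[ℂ] H) (k : ℕ) {x : H} (hx : x ∈ (T.pPow (k + 1)).domain) :
    (T.pPow k).pApp x ∈ T.domain ∧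
      (T.pPow (k + 1)).pApp x = T.pApp ((T.pPow k).pApp x) := by
  obtain ⟨h1, h2⟩ := mem_pPow_succ.mp hx
  rw [pApp_eq _ h1]
  refine ⟨h2, ?_⟩
  rw [pApp_eq _ hx, pApp_eq _ h2, pPow_succ_apply_s2 T k h1 h2 hx]

/-- The powers' domains in `T.domain`: if `x ∈ D(T^{k+1})` then `T^k x ∈ D(T)`. -/
theorem pApp_pPow_mem (T : H →ₗ.[ℂ] H) (k : ℕ) {x : H} (hx : x ∈ (T.pPow (k + 1)).domain) :
    (T.pPow k).pApp x ∈ T.domain := (pApp_pPow_succ T k hx).1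

set_option maxHeartbeats 1000000 in
/-- Commutation: `T^k (T x) = T^{k+1} x` for `x ∈ D(T^{k+1})`. -/
theorem pPow_comm (T : H →ₗ.[ℂ] H) :
    ∀ (k : ℕ) (x : H), x ∈ (T.pPow (k + 1)).domain → x ∈ T.domain ∧
      T.pApp x ∈ (T.pPow k).domain ∧
      (T.pPow k).pApp (T.pApp x) = (T.pPow (k + 1)).pApp x := by
  intro k
  induction k with
  | zero =>
    intro x hx
    have hxT : x ∈ T.domain := mem_pPow_one.mp hx
    refine ⟨hxT, mem_pPow_zero _ _, ?_⟩
    rw [pApp_pPow_zero, (pApp_pPow_succ T 0 hx).2, pApp_pPow_zero]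
  | succ k ih =>
    intro x hx
    have hx1 : x ∈ (T.pPow (k + 1)).domain := T.pPow_domain_succ_le _ hx
    obtain ⟨hxT, hTx, he⟩ := ih x hx1
    have hk1 : (T.pPow (k + 1)).pApp x ∈ T.domain := pApp_pPow_mem T (k + 1) hx
    have hTxk : (T.pPow k).pApp (T.pApp x) ∈ T.domain := by rw [he]; exact hk1
    have hTx1 : T.pApp x ∈ (T.pPow (k + 1)).domain := by
      rw [mem_pPow_succ]
      refine ⟨hTx, ?_⟩
      rwa [← pApp_eq _ hTx]
    refine ⟨hxT, hTx1, ?_⟩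
    rw [(pApp_pPow_succ T k hTx1).2, he, (pApp_pPow_succ T (k + 1) hx).2]

theorem le_apply {f g : H →ₗ.[ℂ] H} (h : f ≤ g) {x : H} (hx : x ∈ f.domain) :
    f ⟨x, hx⟩ = g ⟨x, h.1 hx⟩ := h.2 rfl

theorem pApp_mono {f g : H →ₗ.[ℂ] H} (h : f ≤ g) {x : H} (hx : x ∈ f.domain) :
    f.pApp x = g.pApp x := by
  rw [pApp_eq _ hx, pApp_eq _ (h.1 hx)]
  exact h.2 rfl

theorem pPow_le {T S : H →ₗ.[ℂ] H} (h : T ≤ S) (k : ℕ) : T.pPow k ≤ S.pPow k := by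
  induction k with
  | zero => exact le_rfl
  | succ k ih =>
    constructor
    · intro x hx
      obtain ⟨h1, h2⟩ := mem_pPow_succ.mp hx
      rw [mem_pPow_succ]
      refine ⟨ih.1 h1, ?_⟩
      rw [← le_apply ih h1]
      exact h.1 h2
    · rintro ⟨x, hx⟩ ⟨y, hy⟩ (hxy : x = y)
      subst hxy
      obtain ⟨h1, h2⟩ := mem_pPow_succ.mp hx
      rw [pPow_succ_apply_s2 T k h1 h2 hx]
      have h1' : x ∈ (S.pPow k).domain := ih.1 h1
      have h2' : (S.pPow k) ⟨x, h1'⟩ ∈ S.domain := by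
        rw [← le_apply ih h1]; exact h.1 h2
      rw [pPow_succ_apply_s2 S k h1' h2' hy]
      rw [le_apply h h2]
      congr 1
      exact Subtype.ext (le_apply ih h1)

theorem polyApp_domain (q : Polynomial ℂ) (T : H →ₗ.[ℂ] H) :
    (LinearPMap.polyApp q T).domain = (T.pPow q.natDegree).domain := rfl

theorem polyApp_eval (q : Polynomial ℂ) (T : H →ₗ.[ℂ] H) {x : H}
    (hx : x ∈ (LinearPMap.polyApp q T).domain) :
    (LinearPMap.polyApp q T) ⟨x, hx⟩ =
      ∑ k ∈ Finset.range (q.natDegree + 1), q.coeff k • (T.pPow k).pApp x := by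
  have hdef : (LinearPMap.polyApp q T) ⟨x, hx⟩ =
      (∑ i ∈ (Finset.range (q.natDegree + 1)).attach,
        q.coeff i.1 • ((T.pPow i.1).toFun ∘ₗ Submodule.inclusion
          (T.pPow_domain_le (Nat.lt_succ_iff.mp (Finset.mem_range.mp i.2))))) ⟨x, hx⟩ := rfl
  rw [hdef, LinearMap.sum_apply, ← Finset.sum_attach (Finset.range (q.natDegree + 1))
    (fun k => q.coeff k • (T.pPow k).pApp x)]
  refine Finset.sum_congr rfl fun i _ => ?_
  rw [LinearMap.smul_apply, LinearMap.comp_apply]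
  congr 1
  rw [pApp_eq _ (T.pPow_domain_le (Nat.lt_succ_iff.mp (Finset.mem_range.mp i.2)) hx)]
  rfl

theorem subConst_domain (A : H →ₗ.[ℂ] H) (μ : ℂ) : (A.subConst μ).domain = A.domain := rfl

theorem subConst_apply (A : H →ₗ.[ℂ] H) (μ : ℂ) {x : H} (hx : x ∈ A.domain) :
    (A.subConst μ) ⟨x, hx⟩ = A ⟨x, hx⟩ - μ • x := by
  have : (A.subConst μ) ⟨x, hx⟩ = (A.toFun - μ • A.domain.subtype) ⟨x, hx⟩ := rfl
  rw [this, LinearMap.sub_apply, LinearMap.smul_apply]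
  rfl

theorem polyApp_le {T S : H →ₗ.[ℂ] H} (h : T ≤ S) (q : Polynomial ℂ) :
    LinearPMap.polyApp q T ≤ LinearPMap.polyApp q S := by
  constructor
  · exact (pPow_le h q.natDegree).1
  · rintro ⟨x, hx⟩ ⟨y, hy⟩ (hxy : x = y)
    subst hxy
    rw [polyApp_eval q T hx, polyApp_eval q S hy]
    refine Finset.sum_congr rfl fun k hk => ?_
    congr 1
    exact pApp_mono (pPow_le h k)
      (T.pPow_domain_le (Nat.lt_succ_iff.mp (Finset.mem_range.mp hk)) hx)

end LinearPMap

end Helpers2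
section Helpers3

namespace LinearPMap

variable {H : Type*} [NormedAddCommGroup H] [NormedSpace ℂ H]

theorem subConst_pApp (A : H →ₗ.[ℂ] H) (μ : ℂ) {x : H} (hx : x ∈ A.domain) :
    (A.subConst μ).pApp x = A.pApp x - μ • x := by
  rw [pApp_eq _ (show x ∈ (A.subConst μ).domain from hx), subConst_apply A μ hx, pApp_eq _ hx]

theorem polyApp_pApp (q : Polynomial ℂ) (T : H →ₗ.[ℂ] H) {x : H}
    (hx : x ∈ (T.pPow q.natDegree).domain) :
    (LinearPMap.polyApp q T).pApp x =
      ∑ k ∈ Finset.range (q.natDegree + 1), q.coeff k • (T.pPow k).pApp x := by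
  rw [pApp_eq _ (show x ∈ (LinearPMap.polyApp q T).domain from hx), polyApp_eval q T hx]

variable {T : H →ₗ.[ℂ] H} {p : Polynomial ℂ} {μ : ℂ} {B : H →L[ℂ] H}

/-- Commutation of the bounded inverse `B` of `p(T) - μ` with `T`. -/
theorem bt_comm (hn : p.natDegree ≠ 0)
    (hB1 : ∀ y : H, ∃ hy : B y ∈ ((LinearPMap.polyApp p T).subConst μ).domain,
      ((LinearPMap.polyApp p T).subConst μ) ⟨B y, hy⟩ = y)
    (hB2 : ∀ x : ((LinearPMap.polyApp p T).subConst μ).domain,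
      B (((LinearPMap.polyApp p T).subConst μ) x) = x)
    (x : H) (hx : x ∈ T.domain) :
    B x ∈ (T.pPow (p.natDegree + 1)).domain ∧ T.pApp (B x) = B (T.pApp x) := by
  set n := p.natDegree with hn'
  have hn1 : 1 ≤ n := Nat.one_le_iff_ne_zero.mpr hn
  have hp0 : p ≠ 0 := fun h => hn (by simp [hn', h])
  have hcn : p.coeff n ≠ 0 := by
    rw [hn', Polynomial.coeff_natDegree]
    exact Polynomial.leadingCoeff_ne_zero.mpr hp0
  have hz : B x ∈ (T.pPow n).domain := (hB1 x).1
  have hA'z : ((LinearPMap.polyApp p T).subConst μ).pApp (B x) = x := by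
    rw [pApp_eq _ (hB1 x).1]; exact (hB1 x).2
  have hexp : ∑ k ∈ Finset.range (n + 1), p.coeff k • (T.pPow k).pApp (B x) - μ • B x = x := by
    rw [← polyApp_pApp p T hz,
      ← subConst_pApp (LinearPMap.polyApp p T) μ (show B x ∈ (LinearPMap.polyApp p T).domain from hz)]
    exact hA'z
  -- memberships in T.domain
  have hBxT : B x ∈ T.domain := mem_pPow_one.mp (T.pPow_domain_le hn1 hz)
  have hPk : ∀ k < n, (T.pPow k).pApp (B x) ∈ T.domain := fun k hk =>
    pApp_pPow_mem T k (T.pPow_domain_le hk hz)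
  -- top power in T.domain
  have hsum : p.coeff n • (T.pPow n).pApp (B x)
      = x + μ • B x - ∑ k ∈ Finset.range n, p.coeff k • (T.pPow k).pApp (B x) := by
    rw [Finset.sum_range_succ] at hexp
    have hx' : x = ∑ k ∈ Finset.range n, p.coeff k • (T.pPow k).pApp (B x)
        + p.coeff n • (T.pPow n).pApp (B x) - μ • B x := hexp.symm
    calc p.coeff n • (T.pPow n).pApp (B x)
        = (∑ k ∈ Finset.range n, p.coeff k • (T.pPow k).pApp (B x)
            + p.coeff n • (T.pPow n).pApp (B x) - μ • B x) + μ • B x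
          - ∑ k ∈ Finset.range n, p.coeff k • (T.pPow k).pApp (B x) := by abel
      _ = x + μ • B x - ∑ k ∈ Finset.range n, p.coeff k • (T.pPow k).pApp (B x) := by
          rw [← hx']
  have hPnT : (T.pPow n).pApp (B x) ∈ T.domain := by
    have : (T.pPow n).pApp (B x) = (p.coeff n)⁻¹ • (x + μ • B x -
        ∑ k ∈ Finset.range n, p.coeff k • (T.pPow k).pApp (B x)) := by
      rw [← hsum, smul_smul, inv_mul_cancel₀ hcn, one_smul]
    rw [this]
    exact Submodule.smul_mem _ _ (sub_mem (add_mem hx (Submodule.smul_mem _ _ hBxT))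
      (Submodule.sum_mem _ fun k hk =>
        Submodule.smul_mem _ _ (hPk k (Finset.mem_range.mp hk))))
  have hmem : B x ∈ (T.pPow (n + 1)).domain := by
    rw [mem_pPow_succ]
    exact ⟨hz, by rwa [← pApp_eq _ hz]⟩
  refine ⟨hmem, ?_⟩
  -- all powers in T.domain
  have hPk' : ∀ k ∈ Finset.range (n + 1), p.coeff k • (T.pPow k).pApp (B x) ∈ T.domain := by
    intro k hk
    exact Submodule.smul_mem _ _ (pApp_pPow_mem T k (T.pPow_domain_le
      (Nat.succ_le_succ (Nat.lt_succ_iff.mp (Finset.mem_range.mp hk))) hmem))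
  have hTBx : T.pApp (B x) ∈ (T.pPow n).domain := (pPow_comm T n (B x)
    (T.pPow_domain_le (by omega) hmem)).2.1
  -- A' (T (B x)) = T x
  have key : ((LinearPMap.polyApp p T).subConst μ).pApp (T.pApp (B x)) = T.pApp x := by
    rw [subConst_pApp (LinearPMap.polyApp p T) μ
      (show T.pApp (B x) ∈ (LinearPMap.polyApp p T).domain from hTBx), polyApp_pApp p T hTBx]
    have e1 : ∀ k ∈ Finset.range (n + 1),
        p.coeff k • (T.pPow k).pApp (T.pApp (B x)) =
        p.coeff k • T.pApp ((T.pPow k).pApp (B x)) := by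
      intro k hk
      have hk' : B x ∈ (T.pPow (k + 1)).domain :=
        T.pPow_domain_le (Nat.succ_le_succ (Nat.lt_succ_iff.mp (Finset.mem_range.mp hk))) hmem
      rw [(pPow_comm T k (B x) hk').2.2, (pApp_pPow_succ T k hk').2]
    rw [Finset.sum_congr rfl e1]
    have e2 : T.pApp x = T.pApp (∑ k ∈ Finset.range (n + 1),
        p.coeff k • (T.pPow k).pApp (B x) - μ • B x) := by rw [hexp]
    rw [e2, pApp_sub T (Submodule.sum_mem _ hPk') (Submodule.smul_mem _ _ hBxT),
      pApp_sum T _ _ hPk', pApp_smul T μ hBxT]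
    congr 1
    refine Finset.sum_congr rfl fun k hk => ?_
    rw [pApp_smul T _ (pApp_pPow_mem T k (T.pPow_domain_le
      (Nat.succ_le_succ (Nat.lt_succ_iff.mp (Finset.mem_range.mp hk))) hmem))]
  have := hB2 ⟨T.pApp (B x), hTBx⟩
  rw [← pApp_eq _ (show T.pApp (B x) ∈ ((LinearPMap.polyApp p T).subConst μ).domain from hTBx),
    key] at this
  exact this.symm

end LinearPMap

end Helpers3
section Helpers4

namespace LinearPMap

variable {H : Type*} [NormedAddCommGroup H] [NormedSpace ℂ H]
variable {T : H →ₗ.[ℂ] H} {p : Polynomial ℂ} {μ : ℂ} {B : H →L[ℂ] H}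

/-- The closure of `T` has no eigenvalue among the roots of `p - μ`. -/
theorem eigen_zero (hn : p.natDegree ≠ 0) (hclosable : T.IsClosable)
    (hB1 : ∀ y : H, ∃ hy : B y ∈ ((LinearPMap.polyApp p T).subConst μ).domain,
      ((LinearPMap.polyApp p T).subConst μ) ⟨B y, hy⟩ = y)
    (hB2 : ∀ x : ((LinearPMap.polyApp p T).subConst μ).domain,
      B (((LinearPMap.polyApp p T).subConst μ) x) = x)
    (lam : ℂ) (v : H) (hv : v ∈ T.closure.domain)
    (hSv : T.closure ⟨v, hv⟩ = lam • v) (heval : p.eval lam = μ) : v = 0 := by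
  set n := p.natDegree with hn'
  have hn1 : 1 ≤ n := Nat.one_le_iff_ne_zero.mpr hn
  have hgraph := hclosable.graph_closure_eq_closure_graph
  have hvC : (v, lam • v) ∈ _root_.closure (T.graph : Set (H × H)) := by
    rw [← Submodule.topologicalClosure_coe, hgraph]
    rw [SetLike.mem_coe, mem_graph_iff]
    exact ⟨⟨v, hv⟩, rfl, hSv⟩
  set Φ : H × H →L[ℂ] H × H := B.prodMap B with hΦ
  have hmaps : Φ '' (T.graph : Set (H × H)) ⊆ (T.graph : Set (H × H)) := by
    rintro - ⟨g, hg, rfl⟩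
    rw [SetLike.mem_coe, mem_graph_iff] at hg
    obtain ⟨⟨y, hy⟩, h1, h2⟩ := hg
    obtain ⟨hByD, hcomm⟩ := bt_comm hn hB1 hB2 y hy
    have hByT : B y ∈ T.domain :=
      mem_pPow_one.mp (T.pPow_domain_le (le_trans hn1 (Nat.le_succ n)) hByD)
    rw [SetLike.mem_coe, mem_graph_iff]
    refine ⟨⟨B y, hByT⟩, ?_, ?_⟩
    · show B y = (Φ g).1
      rw [hΦ]; show B y = B g.1
      rw [← h1]
    · show T ⟨B y, hByT⟩ = (Φ g).2
      rw [hΦ]; show T ⟨B y, hByT⟩ = B g.2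
      rw [← h2, ← pApp_eq T hByT, hcomm, pApp_eq T hy]
  have himg : (B v, B (lam • v)) ∈ T.closure.graph := by
    rw [← hgraph]
    have h1 : Φ (v, lam • v) ∈ _root_.closure (Φ '' (T.graph : Set (H × H))) :=
      image_closure_subset_closure_image Φ.continuous ⟨(v, lam • v), hvC, rfl⟩
    have h2 : Φ (v, lam • v) ∈ _root_.closure (T.graph : Set (H × H)) :=
      closure_mono hmaps h1
    rw [← Submodule.topologicalClosure_coe] at h2
    exact h2
  have hBsmul : B (lam • v) = lam • B v := B.map_smul lam v
  rw [hBsmul, mem_graph_iff] at himg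
  obtain ⟨⟨w, hw⟩, hw1, hw2⟩ := himg
  simp only at hw1 hw2
  subst hw1
  -- B v is an eigenvector of T
  have hBvT : B v ∈ T.domain :=
    mem_pPow_one.mp (T.pPow_domain_le hn1 (hB1 v).1)
  have hTBv : T.pApp (B v) = lam • B v := by
    rw [pApp_eq T hBvT, le_apply T.le_closure hBvT, ← hw2]
  -- powers
  have hpow : ∀ k : ℕ, B v ∈ (T.pPow k).domain ∧ (T.pPow k).pApp (B v) = lam ^ k • B v := by
    intro k
    induction k with
    | zero => exact ⟨mem_pPow_zero T _, by rw [pApp_pPow_zero, pow_zero, one_smul]⟩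
    | succ k ih =>
      have hm : B v ∈ (T.pPow (k + 1)).domain := by
        rw [mem_pPow_succ]
        refine ⟨ih.1, ?_⟩
        rw [← pApp_eq _ ih.1, ih.2]
        exact Submodule.smul_mem _ _ hBvT
      refine ⟨hm, ?_⟩
      rw [(pApp_pPow_succ T k hm).2, ih.2, pApp_smul T _ hBvT, hTBv, smul_smul, ← pow_succ]
  -- conclude
  have hval : ((LinearPMap.polyApp p T).subConst μ).pApp (B v) = v := by
    rw [pApp_eq _ (hB1 v).1]; exact (hB1 v).2
  have hD : B v ∈ (T.pPow n).domain := (hB1 v).1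
  rw [subConst_pApp (LinearPMap.polyApp p T) μ
    (show B v ∈ (LinearPMap.polyApp p T).domain from hD), polyApp_pApp p T hD] at hval
  have : ∑ k ∈ Finset.range (n + 1), p.coeff k • (T.pPow k).pApp (B v)
      = (p.eval lam) • B v := by
    rw [Polynomial.eval_eq_sum_range, Finset.sum_smul]
    refine Finset.sum_congr rfl fun k _ => ?_
    rw [(hpow k).2, smul_smul]
  rw [this, heval, sub_self] at hval
  exact hval.symm

end LinearPMap

end Helpers4
section Helpers5

namespace LinearPMap

open Polynomial

variable {H : Type*} [NormedAddCommGroup H] [NormedSpace ℂ H]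
variable {T : H →ₗ.[ℂ] H} {p : Polynomial ℂ} {μ : ℂ} {B : H →L[ℂ] H}

/-- Injectivity of `p(cl T) - μ` on `D((cl T)^n)`. -/
theorem poly_closure_inj (hclosable : T.IsClosable)
    (hB1 : ∀ y : H, ∃ hy : B y ∈ ((LinearPMap.polyApp p T).subConst μ).domain,
      ((LinearPMap.polyApp p T).subConst μ) ⟨B y, hy⟩ = y)
    (hB2 : ∀ x : ((LinearPMap.polyApp p T).subConst μ).domain,
      B (((LinearPMap.polyApp p T).subConst μ) x) = x)
    (x : H) (hx : x ∈ (T.closure.pPow p.natDegree).domain)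
    (hzero : (LinearPMap.polyApp p T.closure) ⟨x, hx⟩ - μ • x = 0) : x = 0 := by
  classical
  set n := p.natDegree with hn'
  set S := T.closure with hS
  set ev : Polynomial ℂ → H := fun q => ∑ k ∈ Finset.range (n + 1),
    q.coeff k • (S.pPow k).pApp x with hev
  have hev_sub : ∀ q₁ q₂, ev (q₁ - q₂) = ev q₁ - ev q₂ := by
    intro q₁ q₂
    simp only [hev, coeff_sub, sub_smul, Finset.sum_sub_distrib]
  have hev_C_mul : ∀ (c : ℂ) (q), ev (Polynomial.C c * q) = c • ev q := by
    intro c q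
    simp only [hev, coeff_C_mul, mul_smul, Finset.smul_sum]
  have hev_C : ∀ c : ℂ, ev (Polynomial.C c) = c • x := by
    intro c
    simp only [hev]
    rw [Finset.sum_eq_single 0]
    · rw [coeff_C_zero, pApp_pPow_zero]
    · intro k _ hk
      rw [coeff_C, if_neg hk, zero_smul]
    · intro h
      exact absurd (Finset.mem_range.mpr (Nat.succ_pos n)) h
  have hev_p : ev p = (LinearPMap.polyApp p S) ⟨x, hx⟩ := (polyApp_eval p S hx).symm
  -- the action of multiplication by (X - C a)
  have hev_X_sub : ∀ (a : ℂ) (r : Polynomial ℂ), r.natDegree < n →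
      ev r ∈ S.domain ∧
        ev ((Polynomial.X - Polynomial.C a) * r) = S.pApp (ev r) - a • ev r := by
    intro a r hr
    have hrn : r.coeff n = 0 := coeff_eq_zero_of_natDegree_lt hr
    have htrim : ev r = ∑ k ∈ Finset.range n, r.coeff k • (S.pPow k).pApp x := by
      simp only [hev]
      rw [Finset.sum_range_succ, hrn, zero_smul, add_zero]
    have hPmem : ∀ k ∈ Finset.range n, r.coeff k • (S.pPow k).pApp x ∈ S.domain :=
      fun k hk => Submodule.smul_mem _ _
        (pApp_pPow_mem S k (S.pPow_domain_le (Finset.mem_range.mp hk) hx))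
    have hwmem : ev r ∈ S.domain := by
      rw [htrim]; exact Submodule.sum_mem _ hPmem
    refine ⟨hwmem, ?_⟩
    have hXr : ev (Polynomial.X * r) = S.pApp (ev r) := by
      rw [htrim, pApp_sum S _ _ hPmem]
      simp only [hev]
      rw [Finset.sum_range_succ']
      have h0 : (Polynomial.X * r).coeff 0 = 0 := by
        rw [mul_coeff_zero, coeff_X_zero, zero_mul]
      rw [h0, zero_smul, add_zero]
      refine Finset.sum_congr rfl fun k hk => ?_
      rw [coeff_X_mul]
      have hk1 : x ∈ (S.pPow (k + 1)).domain :=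
        S.pPow_domain_le (Nat.succ_le_of_lt (Finset.mem_range.mp hk)) hx
      rw [pApp_smul S _ (pApp_pPow_mem S k hk1), (pApp_pPow_succ S k hk1).2]
    rw [sub_mul, hev_sub, hXr, hev_C_mul]
  -- monic products
  have hmonic : ∀ L : List ℂ,
      ((L.map fun a => Polynomial.X - Polynomial.C a).prod).Monic := by
    intro L
    induction L with
    | nil => simpa using monic_one
    | cons a L ih =>
      rw [List.map_cons, List.prod_cons]
      exact (monic_X_sub_C a).mul ih
  have hdeg : ∀ L : List ℂ,
      ((L.map fun a => Polynomial.X - Polynomial.C a).prod).natDegree = L.length := by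
    intro L
    induction L with
    | nil => simp
    | cons a L ih =>
      rw [List.map_cons, List.prod_cons, (monic_X_sub_C a).natDegree_mul (hmonic L),
        natDegree_X_sub_C, ih, List.length_cons]
      omega
  -- the chain argument
  have chain : ∀ L : List ℂ, L.length ≤ n → (∀ lam ∈ L, p.eval lam = μ) →
      ev (L.map fun a => Polynomial.X - Polynomial.C a).prod = 0 → x = 0 := by
    intro L
    induction L with
    | nil =>
      intro _ _ h0
      have h1 : ev 1 = 0 := by
        simp only [List.map_nil, List.prod_nil] at h0
        exact h0
      have h2 := hev_C 1
      rw [map_one] at h2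
      rw [h1] at h2
      simpa using h2.symm
    | cons a L ih =>
      intro hlen hroots h0
      rw [List.length_cons] at hlen
      rw [List.map_cons, List.prod_cons] at h0
      have hdegL : ((L.map fun a => Polynomial.X - Polynomial.C a).prod).natDegree < n := by
        rw [hdeg L]
        omega
      obtain ⟨hwmem, hrw⟩ := hev_X_sub a _ hdegL
      rw [hrw] at h0
      have hSw : S ⟨ev (L.map fun a => Polynomial.X - Polynomial.C a).prod, hwmem⟩
          = a • ev (L.map fun a => Polynomial.X - Polynomial.C a).prod := by
        rw [← pApp_eq S hwmem]
        have := sub_eq_zero.mp h0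
        exact this
      have hw0 : ev (L.map fun a => Polynomial.X - Polynomial.C a).prod = 0 :=
        eigen_zero (by omega) hclosable hB1 hB2 a _ hwmem hSw
          (hroots a List.mem_cons_self)
      exact ih (by omega) (fun lam hl => hroots lam (List.mem_cons_of_mem a hl)) hw0
  -- put everything together with the factorization of q = p - C μ
  set q : Polynomial ℂ := p - Polynomial.C μ with hq
  have hevq : ev q = 0 := by
    rw [hq, hev_sub, hev_C, hev_p]
    exact hzero
  by_cases hq0 : q = 0
  · -- p = C μ; then B y = 0 forces everything to vanish
    have hpC : p = Polynomial.C μ := by rwa [hq, sub_eq_zero] at hq0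
    have : ∀ y : H, y = 0 := by
      intro y
      obtain ⟨hy, hAy⟩ := hB1 y
      have h1 : ((LinearPMap.polyApp p T).subConst μ).pApp (B y) = y := by
        rw [pApp_eq _ hy]; exact hAy
      have hyD : B y ∈ (T.pPow p.natDegree).domain := hy
      rw [subConst_pApp (LinearPMap.polyApp p T) μ
        (show B y ∈ (LinearPMap.polyApp p T).domain from hyD),
        polyApp_pApp p T hyD] at h1
      have : ∑ k ∈ Finset.range (p.natDegree + 1), p.coeff k • (T.pPow k).pApp (B y)
          = μ • B y := by
        rw [Finset.sum_eq_single 0]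
        · rw [hpC, coeff_C_zero, pApp_pPow_zero]
        · intro k _ hk
          rw [hpC, coeff_C, if_neg hk, zero_smul]
        · intro h
          exact absurd (Finset.mem_range.mpr (Nat.succ_pos _)) h
      rw [this, sub_self] at h1
      exact h1.symm
    exact this x
  · have hcard : Multiset.card q.roots = q.natDegree :=
      splits_iff_card_roots.mp (IsAlgClosed.splits q)
    have hfact := C_leadingCoeff_mul_prod_multiset_X_sub_C hcard
    set L : List ℂ := q.roots.toList with hL
    have hLcoe : (L : Multiset ℂ) = q.roots := Multiset.coe_toList _
    have hLlen : L.length = q.natDegree := by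
      rw [hL, Multiset.length_toList, hcard]
    have hqdeg : q.natDegree ≤ n := by
      refine le_trans (natDegree_sub_le p (Polynomial.C μ)) ?_
      simp [hn']
    have hprodL : (Multiset.map (fun a => Polynomial.X - Polynomial.C a) q.roots).prod
        = (L.map fun a => Polynomial.X - Polynomial.C a).prod := by
      rw [← hLcoe]
      rfl
    have hfact' : Polynomial.C q.leadingCoeff *
        (L.map fun a => Polynomial.X - Polynomial.C a).prod = q := by
      rw [← hprodL]; exact hfact
    have hev0 : ev (L.map fun a => Polynomial.X - Polynomial.C a).prod = 0 := by
      have := hevq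
      rw [← hfact', hev_C_mul] at this
      rcases smul_eq_zero.mp this with hc | h
      · exact absurd hc (leadingCoeff_ne_zero.mpr hq0)
      · exact h
    refine chain L (by omega) ?_ hev0
    intro lam hlam
    have : lam ∈ q.roots := by
      rw [← hLcoe] at *
      exact hlam
    have hr := (mem_roots hq0).mp this
    have : q.eval lam = 0 := hr
    rw [hq, eval_sub, eval_C, sub_eq_zero] at this
    exact this

end LinearPMap

end Helpers5
section Helpers6

namespace LinearPMap

variable {H : Type*} [NormedAddCommGroup H] [NormedSpace ℂ H]

theorem isClosed_of_bddinv {A : H →ₗ.[ℂ] H} {μ : ℂ} {B : H →L[ℂ] H}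
    (hB1 : ∀ y : H, ∃ hy : B y ∈ (A.subConst μ).domain, (A.subConst μ) ⟨B y, hy⟩ = y)
    (hB2 : ∀ x : (A.subConst μ).domain, B ((A.subConst μ) x) = x) :
    A.IsClosed := by
  have hseq : IsSeqClosed (A.graph : Set (H × H)) := by
    intro g ab hg hlim
    have h1 : Filter.Tendsto (fun j => (g j).1) Filter.atTop (nhds ab.1) :=
      (Continuous.tendsto continuous_fst ab).comp hlim
    have h2 : Filter.Tendsto (fun j => (g j).2) Filter.atTop (nhds ab.2) :=
      (Continuous.tendsto continuous_snd ab).comp hlim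
    set z : H := ab.2 - μ • ab.1 with hz
    have hIz : ∀ j, B ((g j).2 - μ • (g j).1) = (g j).1 := by
      intro j
      have := hg j
      rw [SetLike.mem_coe, mem_graph_iff] at this
      obtain ⟨⟨w, hw⟩, hw1, hw2⟩ := this
      have := hB2 ⟨w, hw⟩
      rw [subConst_apply A μ hw] at this
      simp only at hw1 hw2
      rw [← hw1, ← hw2]
      exact this
    have hzlim : Filter.Tendsto (fun j => (g j).2 - μ • (g j).1) Filter.atTop (nhds z) :=
      h2.sub (h1.const_smul μ)
    have hBz : Filter.Tendsto (fun j => B ((g j).2 - μ • (g j).1)) Filter.atTop (nhds (B z)) :=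
      (B.continuous.tendsto z).comp hzlim
    have hBz1 : B z = ab.1 := by
      refine tendsto_nhds_unique ?_ h1
      have : (fun j => B ((g j).2 - μ • (g j).1)) = fun j => (g j).1 := funext hIz
      rwa [this] at hBz
    have hdom : ab.1 ∈ A.domain := hBz1 ▸ (hB1 z).1
    have hval : A ⟨ab.1, hdom⟩ = ab.2 := by
      have h3 := (hB1 z).2
      rw [subConst_apply A μ (hB1 z).1] at h3
      have h4 : A ⟨B z, (hB1 z).1⟩ = A ⟨ab.1, hdom⟩ := by congr 1; exact Subtype.ext hBz1
      rw [h4, hBz1, hz] at h3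
      exact sub_left_inj.mp h3
    rw [SetLike.mem_coe, mem_graph_iff]
    exact ⟨⟨ab.1, hdom⟩, rfl, hval⟩
  exact hseq.isClosed

theorem closure_eq_self_of_isClosed {A : H →ₗ.[ℂ] H} (h : A.IsClosed) : A.closure = A := by
  apply eq_of_eq_graph
  rw [← h.isClosable.graph_closure_eq_closure_graph]
  exact h.submodule_topologicalClosure_eq

end LinearPMap

end Helpers6

/-- `cl(p(T)) = p(cl(T))` when `σ(p(T)) ≠ ℂ`. -/
theorem statement_2 {H : Type*} [NormedAddCommGroup H] [InnerProductSpace ℂ H] [CompleteSpace H]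
    (T : H →ₗ.[ℂ] H) (hdense : Dense (T.domain : Set H)) (hclosable : T.IsClosable)
    (p : Polynomial ℂ)
    (hspec : (LinearPMap.polyApp p T).pSpectrum ≠ Set.univ) :
    (LinearPMap.polyApp p T).closure = LinearPMap.polyApp p T.closure := by
  
  classical
  obtain ⟨μ, hμ⟩ := (Set.ne_univ_iff_exists_notMem _).mp hspec
  simp only [LinearPMap.pSpectrum, Set.mem_setOf_eq, not_not] at hμ
  obtain ⟨B, hB1, hB2⟩ := hμ
  have hclosed : (LinearPMap.polyApp p T).IsClosed := LinearPMap.isClosed_of_bddinv hB1 hB2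
  rw [LinearPMap.closure_eq_self_of_isClosed hclosed]
  have hle : LinearPMap.polyApp p T ≤ LinearPMap.polyApp p T.closure :=
    LinearPMap.polyApp_le T.le_closure p
  have hdom : (LinearPMap.polyApp p T.closure).domain ≤ (LinearPMap.polyApp p T).domain := by
    intro x hx
    set y := (LinearPMap.polyApp p T.closure) ⟨x, hx⟩ - μ • x with hy
    have hzdom : B y ∈ (LinearPMap.polyApp p T).domain := (hB1 y).1
    have hzS : B y ∈ (LinearPMap.polyApp p T.closure).domain := hle.1 hzdom
    have hAz : (LinearPMap.polyApp p T.closure) ⟨B y, hzS⟩ - μ • B y = y := by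
      have h2 := (hB1 y).2
      rw [LinearPMap.subConst_apply (LinearPMap.polyApp p T) μ
        (show B y ∈ (LinearPMap.polyApp p T).domain from (hB1 y).1)] at h2
      rw [show (LinearPMap.polyApp p T.closure) ⟨B y, hzS⟩
        = (LinearPMap.polyApp p T) ⟨B y, hzdom⟩ from (LinearPMap.le_apply hle hzdom).symm]
      exact h2
    have hw : x - B y ∈ (LinearPMap.polyApp p T.closure).domain := sub_mem hx hzS
    have hzero : (LinearPMap.polyApp p T.closure) ⟨x - B y, hw⟩ - μ • (x - B y) = 0 := by
      have hsplit : (⟨x - B y, hw⟩ : (LinearPMap.polyApp p T.closure).domain)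
          = ⟨x, hx⟩ - ⟨B y, hzS⟩ := rfl
      rw [hsplit, LinearPMap.map_sub]
      calc (LinearPMap.polyApp p T.closure) ⟨x, hx⟩
            - (LinearPMap.polyApp p T.closure) ⟨B y, hzS⟩ - μ • (x - B y)
          = ((LinearPMap.polyApp p T.closure) ⟨x, hx⟩ - μ • x)
            - ((LinearPMap.polyApp p T.closure) ⟨B y, hzS⟩ - μ • B y) := by
            rw [smul_sub]; abel
        _ = y - y := by rw [← hy, hAz]
        _ = 0 := sub_self y
    have hxz : x - B y = 0 :=
      LinearPMap.poly_closure_inj hclosable hB1 hB2 (x - B y) hw hzero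
    have : x = B y := by
      have := sub_eq_zero.mp hxz
      exact this
    rw [this]
    exact hzdom
  refine LinearPMap.ext (le_antisymm hle.1 hdom) ?_
  intro a b hab
  exact hle.2 rfl
end
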